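/- arXiv:1106.2994 — 5 statements merged into one kernel-verified Lean document; each statement's English description precedes it below -/
import Mathlib

section
/- Let λ > 0, let k ≥ 1 be an integer, and let a ≥ 0. If X and Y are independent random variables on a probability space, X having the exponential distribution with rate λ and Y having the Gamma distribution with shape k and rate λ, then P(X ≥ Y + a) = (1/2)^k · e^{−λa}. -/
open MeasureTheory ProbabilityTheory Real Set

lemma expMeasure_Ici_aux {r : ℝ} (hr : 0 < r) {t : ℝ} (ht : 0 ≤ t) :
    expMeasure r (Set.Ici t) = ENNReal.ofReal (Real.exp (-(r * t))) := by
  haveI := isProbabilityMeasure_expMeasure hr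
  have hIic : expMeasure r (Set.Iic t) = ENNReal.ofReal (1 - Real.exp (-(r * t))) := by
    have : expMeasure r (Set.Iic t) = ∫⁻ y in Set.Iic t, exponentialPDF r y := by
      rw [expMeasure, gammaMeasure, withDensity_apply _ measurableSet_Iic]; rfl
    rw [this, lintegral_exponentialPDF_eq_antiDeriv hr t, if_pos ht]
  have hIio : expMeasure r (Set.Iio t) = expMeasure r (Set.Iic t) := by
    have hsing : expMeasure r {t} = 0 := by
      have : expMeasure r ≪ volume := by
        rw [expMeasure, gammaMeasure]; exact withDensity_absolutelyContinuous _ _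
      exact this (measure_singleton t)
    have hu : Set.Iic t = Set.Iio t ∪ {t} := by
      ext x; simp [le_iff_lt_or_eq]
    refine le_antisymm (measure_mono Set.Iio_subset_Iic_self) ?_
    rw [hu]
    exact (measure_union_le _ _).trans (by rw [hsing, add_zero])
  have hcompl : Set.Ici t = (Set.Iio t)ᶜ := by ext x; simp
  have hle : Real.exp (-(r * t)) ≤ 1 := by
    apply Real.exp_le_one_iff.mpr; nlinarith
  rw [hcompl, measure_compl measurableSet_Iio (measure_ne_top _ _), measure_univ, hIio, hIic,
    ENNReal.ofReal_sub 1 (Real.exp_pos _).le, ENNReal.ofReal_one,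
    ENNReal.sub_sub_cancel ENNReal.one_ne_top (ENNReal.ofReal_le_one.mpr hle)]

/-- If `X` and `Y` are independent, `X` exponential with rate
`λ > 0` and `Y` Gamma with integer shape `k ≥ 1` and rate `λ`, then for `a ≥ 0`,
`P(X ≥ Y + a) = (1/2)^k e^{−λa}`. -/
theorem stmt_13 {Ω : Type*} [MeasurableSpace Ω] (P : Measure Ω) [IsProbabilityMeasure P]
    (l : ℝ) (hl : 0 < l) (k : ℕ) (hk : 1 ≤ k) (a : ℝ) (ha : 0 ≤ a)
    (X Y : Ω → ℝ) (hX : Measurable X) (hY : Measurable Y)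
    (hindep : IndepFun X Y P)
    (hXd : P.map X = expMeasure l)
    (hYd : P.map Y = gammaMeasure k l) :
    P {ω | X ω ≥ Y ω + a} = ENNReal.ofReal ((1/2)^k * Real.exp (-(l * a))) := by
  have hkpos : (0:ℝ) < (k:ℝ) := by exact_mod_cast hk
  haveI := isProbabilityMeasure_gammaMeasure hkpos hl
  haveI := isProbabilityMeasure_expMeasure hl
  have hprod : P.map (fun ω => (Y ω, X ω)) = (gammaMeasure k l).prod (expMeasure l) := by
    rw [← hXd, ← hYd]
    exact (indepFun_iff_map_prod_eq_prod_map_map hY.aemeasurable hX.aemeasurable).mp hindep.symm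
  have hs : MeasurableSet {p : ℝ × ℝ | p.1 + a ≤ p.2} :=
    measurableSet_le (measurable_fst.add_const a) measurable_snd
  have h1 : P {ω | X ω ≥ Y ω + a}
      = ((gammaMeasure k l).prod (expMeasure l)) {p : ℝ × ℝ | p.1 + a ≤ p.2} := by
    rw [← hprod, Measure.map_apply (hY.prodMk hX) hs]
    rfl
  rw [h1, Measure.prod_apply hs]
  have hpre : ∀ y : ℝ, (Prod.mk y ⁻¹' {p : ℝ × ℝ | p.1 + a ≤ p.2}) = Set.Ici (y + a) := by
    intro y; ext x; simp [Set.mem_Ici]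
  simp_rw [hpre]
  -- replace tail by exponential formula a.e. w.r.t. gamma measure
  have h0 : gammaMeasure k l (Set.Iio 0) = 0 := by
    rw [gammaMeasure, withDensity_apply _ measurableSet_Iio]
    exact lintegral_gammaPDF_of_nonpos le_rfl
  have hae : ∀ᵐ y ∂(gammaMeasure (k:ℝ) l),
      expMeasure l (Set.Ici (y + a)) = ENNReal.ofReal (Real.exp (-(l * (y + a)))) := by
    have : ∀ᵐ y ∂(gammaMeasure (k:ℝ) l), y ∉ Set.Iio 0 := by
      rw [ae_iff]; simpa using (show gammaMeasure (k:ℝ) l {x | x < 0} = 0 from h0)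
    filter_upwards [this] with y hy
    have hy0 : 0 ≤ y := not_lt.mp (by simpa using hy)
    exact expMeasure_Ici_aux hl (by linarith)
  have hmg : Measurable (gammaPDF (k:ℝ) l) := (measurable_gammaPDFReal _ _).ennreal_ofReal
  have hmg2 : Measurable (gammaPDF (k:ℝ) (2*l)) := (measurable_gammaPDFReal _ _).ennreal_ofReal
  rw [lintegral_congr_ae hae, gammaMeasure,
    lintegral_withDensity_eq_lintegral_mul _ hmg (by measurability)]
  have hpt : ∀ y : ℝ, (gammaPDF (k:ℝ) l * fun y => ENNReal.ofReal (Real.exp (-(l * (y + a))))) y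
      = ENNReal.ofReal ((1/2)^k * Real.exp (-(l * a))) * gammaPDF (k:ℝ) (2*l) y := by
    intro y
    simp only [Pi.mul_apply]
    rcases lt_or_ge y 0 with hy | hy
    · rw [gammaPDF_of_neg hy, gammaPDF_of_neg hy, zero_mul, mul_zero]
    · rw [gammaPDF_of_nonneg hy, gammaPDF_of_nonneg hy,
        ← ENNReal.ofReal_mul (by positivity), ← ENNReal.ofReal_mul (by positivity)]
      congr 1
      have h2l : (2*l) ^ (k:ℝ) = 2 ^ (k:ℝ) * l ^ (k:ℝ) :=
        Real.mul_rpow (by norm_num) hl.le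
      have h2k : (2:ℝ) ^ (k:ℝ) = 2 ^ k := by
        rw [Real.rpow_natCast]
      have hGk : Real.Gamma (k:ℝ) ≠ 0 :=
        (Real.Gamma_pos_of_pos (by exact_mod_cast hk)).ne'
      rw [show -(l*(y+a)) = -(l*y) + -(l*a) by ring, Real.exp_add,
        show -(2*l*y) = -(l*y) + -(l*y) by ring, Real.exp_add, h2l, h2k,
        one_div, inv_pow]
      field_simp
  rw [lintegral_congr hpt, lintegral_const_mul _ hmg2,
    lintegral_gammaPDF_eq_one hkpos (by linarith), mul_one]
end

section
/- Let λ > 0, let J ≥ 1 be an integer, and let a > 0. If X_1, …, X_J are i.i.d. random variables each having the exponential distribution with rate λ, and S := X_1 + ⋯ + X_J, then P(∃ i ∈ {1,…,J}, 2·X_i ≥ S + a) = J · (1/2)^{J−1} · e^{−λa}. -/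
open MeasureTheory ProbabilityTheory Real Set

lemma expMeasure_eq' (l : ℝ) : expMeasure l = volume.withDensity (exponentialPDF l) := rfl

lemma measurable_exp_neg_oR (l : ℝ) :
    Measurable fun t : ℝ => ENNReal.ofReal (Real.exp (-(l * t))) :=
  ((measurable_id.const_mul l).neg.exp).ennreal_ofReal

lemma exp_survival {l : ℝ} (hl : 0 < l) {t : ℝ} (ht : 0 ≤ t) :
    expMeasure l (Ici t) = ENNReal.ofReal (Real.exp (-(l * t))) := by
  haveI := isProbabilityMeasure_expMeasure hl
  have hiic : expMeasure l (Iic t) = ENNReal.ofReal (1 - Real.exp (-(l * t))) := by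
    rw [expMeasure_eq', withDensity_apply _ measurableSet_Iic,
      lintegral_exponentialPDF_eq_antiDeriv hl, if_pos ht]
  have hpt : expMeasure l {t} = 0 := by
    rw [expMeasure_eq']
    exact withDensity_absolutelyContinuous _ _ volume_singleton
  have hIio : expMeasure l (Iio t) = ENNReal.ofReal (1 - Real.exp (-(l * t))) := by
    rw [← hiic]
    refine le_antisymm (measure_mono Iio_subset_Iic_self) ?_
    calc expMeasure l (Iic t) = expMeasure l (Iio t ∪ {t}) := by rw [Iio_union_right]
      _ ≤ expMeasure l (Iio t) + expMeasure l {t} := measure_union_le _ _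
      _ = expMeasure l (Iio t) := by rw [hpt, add_zero]
  have hcompl : expMeasure l (Ici t) = 1 - expMeasure l (Iio t) := by
    rw [← compl_Iio]
    rw [measure_compl measurableSet_Iio (measure_ne_top _ _), measure_univ]
  rw [hcompl, hIio]
  have h1 : Real.exp (-(l * t)) ≤ 1 := Real.exp_le_one_iff.2 (by nlinarith)
  refine ENNReal.sub_eq_of_eq_add ENNReal.ofReal_ne_top ?_
  rw [← ENNReal.ofReal_add (Real.exp_nonneg _) (by linarith), ← ENNReal.ofReal_one]
  norm_num

lemma lintegral_exp_neg_expMeasure {l : ℝ} (hl : 0 < l) :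
    ∫⁻ x, ENNReal.ofReal (Real.exp (-(l * x))) ∂(expMeasure l) = ENNReal.ofReal (1/2) := by
  have hpm : Measurable (exponentialPDF l) := (measurable_exponentialPDFReal l).ennreal_ofReal
  rw [expMeasure_eq', lintegral_withDensity_eq_lintegral_mul _ hpm (measurable_exp_neg_oR l)]
  have heq : ∀ x : ℝ, (exponentialPDF l * fun t => ENNReal.ofReal (Real.exp (-(l * t)))) x
      = ENNReal.ofReal (1/2) * exponentialPDF (2*l) x := by
    intro x
    rcases le_or_gt 0 x with hx | hx
    · rw [Pi.mul_apply, exponentialPDF_of_nonneg hx, exponentialPDF_of_nonneg hx,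
        ← ENNReal.ofReal_mul (by positivity), ← ENNReal.ofReal_mul (by norm_num)]
      congr 1
      rw [mul_assoc, ← Real.exp_add]
      rw [show -(l*x) + -(l*x) = -(2*l*x) by ring]
      ring
    · rw [Pi.mul_apply, exponentialPDF_of_neg hx, exponentialPDF_of_neg hx, zero_mul, mul_zero]
  have hpm2 : Measurable (exponentialPDF (2*l)) :=
    (measurable_exponentialPDFReal (2*l)).ennreal_ofReal
  rw [lintegral_congr heq, lintegral_const_mul _ hpm2,
    lintegral_exponentialPDF_eq_one (by linarith), mul_one]

lemma lintegral_exp_neg_sum {Ω : Type*} [MeasurableSpace Ω] (P : Measure Ω)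
    [IsProbabilityMeasure P] {l : ℝ} (hl : 0 < l) {J : ℕ} (X : Fin J → Ω → ℝ)
    (hX : ∀ i, Measurable (X i))
    (hindep : iIndepFun X P)
    (hXd : ∀ i, P.map (X i) = expMeasure l) (s : Finset (Fin J)) :
    ∫⁻ ω, ENNReal.ofReal (Real.exp (-(l * ∑ j ∈ s, X j ω))) ∂P
      = ENNReal.ofReal (1/2) ^ s.card := by
  classical
  induction s using Finset.induction_on with
  | empty => simp
  | insert k s hk ih =>
    have hsm : Measurable fun ω => ∑ j ∈ s, X j ω := Finset.measurable_sum _ fun j _ => hX j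
    have hsum : (∑ j ∈ s, X j) = fun ω => ∑ j ∈ s, X j ω := by
      ext ω; simp [Finset.sum_apply]
    have hI : IndepFun (fun ω => ∑ j ∈ s, X j ω) (X k) P := by
      rw [← hsum]; exact hindep.indepFun_finsetSum_of_notMem hX hk
    have hI' : IndepFun (fun ω => ENNReal.ofReal (Real.exp (-(l * ∑ j ∈ s, X j ω))))
        (fun ω => ENNReal.ofReal (Real.exp (-(l * X k ω)))) P :=
      hI.comp (measurable_exp_neg_oR l) (measurable_exp_neg_oR l)
    have hXk : ∫⁻ ω, ENNReal.ofReal (Real.exp (-(l * X k ω))) ∂P = ENNReal.ofReal (1/2) := by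
      rw [← lintegral_map (measurable_exp_neg_oR l) (hX k), hXd k,
        lintegral_exp_neg_expMeasure hl]
    calc ∫⁻ ω, ENNReal.ofReal (Real.exp (-(l * ∑ j ∈ insert k s, X j ω))) ∂P
        = ∫⁻ ω, ENNReal.ofReal (Real.exp (-(l * ∑ j ∈ s, X j ω)))
            * ENNReal.ofReal (Real.exp (-(l * X k ω))) ∂P := by
          refine lintegral_congr fun ω => ?_
          rw [Finset.sum_insert hk, ← ENNReal.ofReal_mul (Real.exp_nonneg _), ← Real.exp_add]
          congr 2; ring
      _ = (∫⁻ ω, ENNReal.ofReal (Real.exp (-(l * ∑ j ∈ s, X j ω))) ∂P)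
            * ∫⁻ ω, ENNReal.ofReal (Real.exp (-(l * X k ω))) ∂P :=
          lintegral_mul_eq_lintegral_mul_lintegral_of_indepFun''
            ((measurable_exp_neg_oR l).comp hsm).aemeasurable
            ((measurable_exp_neg_oR l).comp (hX k)).aemeasurable hI'
      _ = ENNReal.ofReal (1/2) ^ (insert k s).card := by
          rw [ih, hXk, Finset.card_insert_of_notMem hk, pow_succ]

/-- If `X_1, …, X_J` are i.i.d. exponential with rate `λ > 0`
and `S := X_1 + ⋯ + X_J`, then for `a > 0`,
`P(∃ i, 2 X_i ≥ S + a) = J (1/2)^{J−1} e^{−λa}`. -/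
theorem stmt_15 {Ω : Type*} [MeasurableSpace Ω] (P : Measure Ω) [IsProbabilityMeasure P]
    (l : ℝ) (hl : 0 < l) (J : ℕ) (hJ : 1 ≤ J) (a : ℝ) (ha : 0 < a)
    (X : Fin J → Ω → ℝ) (hX : ∀ i, Measurable (X i))
    (hindep : iIndepFun X P)
    (hXd : ∀ i, P.map (X i) = expMeasure l)
    (S : Ω → ℝ) (hS : S = fun ω => ∑ i, X i ω) :
    P {ω | ∃ i, 2 * X i ω ≥ S ω + a}
      = ENNReal.ofReal ((J : ℝ) * (1/2)^(J - 1) * Real.exp (-(l * a))) := by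
  classical
  subst hS
  haveI := isProbabilityMeasure_expMeasure hl
  -- null set where some X is negative
  have hnull : ∀ j, P {ω | X j ω < 0} = 0 := by
    intro j
    have h1 : P {ω | X j ω < 0} = (P.map (X j)) (Iio 0) := by
      rw [Measure.map_apply (hX j) measurableSet_Iio]; rfl
    rw [h1, hXd j, expMeasure_eq', withDensity_apply _ measurableSet_Iio,
      lintegral_exponentialPDF_of_nonpos le_rfl]
  set G : Set Ω := {ω | ∀ j, 0 ≤ X j ω} with hGdef
  have hGmeas : MeasurableSet G := by
    have : G = ⋂ j, {ω | 0 ≤ X j ω} := by ext ω; simp [hGdef]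
    rw [this]
    exact MeasurableSet.iInter fun j => measurableSet_le measurable_const (hX j)
  have hGc : P Gᶜ = 0 := by
    refine measure_mono_null (fun ω hω => ?_) (measure_iUnion_null hnull)
    simp only [hGdef, mem_compl_iff, mem_setOf_eq, not_forall, not_le] at hω
    obtain ⟨j, hj⟩ := hω
    exact mem_iUnion.2 ⟨j, hj⟩
  have hinterG : ∀ s : Set Ω, P (s ∩ G) = P s := fun s => measure_inter_conull hGc
  set A : Fin J → Set Ω := fun i => {ω | 2 * X i ω ≥ (∑ j, X j ω) + a} with hAdef
  have hSm : Measurable fun ω => ∑ j, X j ω := Finset.measurable_sum _ fun j _ => hX j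
  have hAmeas : ∀ i, MeasurableSet (A i) := fun i =>
    measurableSet_le (hSm.add_const a) ((hX i).const_mul 2)
  -- the key per-index computation
  have hkey : ∀ i, P (A i)
      = ENNReal.ofReal (1/2) ^ (J - 1) * ENNReal.ofReal (Real.exp (-(l * a))) := by
    intro i
    set T : Ω → ℝ := fun ω => ∑ j ∈ Finset.univ.erase i, X j ω with hTdef
    have hTm : Measurable T := Finset.measurable_sum _ fun j _ => hX j
    have hsum : ∀ ω, (∑ j, X j ω) = X i ω + T ω := fun ω =>
      (Finset.add_sum_erase Finset.univ (fun j => X j ω) (Finset.mem_univ i)).symm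
    have hA : A i = (fun ω => (T ω, X i ω)) ⁻¹' {p : ℝ × ℝ | p.1 + a ≤ p.2} := by
      ext ω
      simp only [hAdef, mem_setOf_eq, ge_iff_le, mem_preimage]
      rw [hsum ω]
      constructor <;> intro h <;> linarith
    have hTsum : T = ∑ j ∈ Finset.univ.erase i, X j := by
      ext ω; simp [hTdef, Finset.sum_apply]
    have hI : IndepFun T (X i) P := by
      rw [hTsum]
      exact hindep.indepFun_finsetSum_of_notMem hX (Finset.notMem_erase i _)
    have hsetm : MeasurableSet {p : ℝ × ℝ | p.1 + a ≤ p.2} :=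
      measurableSet_le (measurable_fst.add_const a) measurable_snd
    have hmap : P.map (fun ω => (T ω, X i ω)) = (P.map T).prod (expMeasure l) := by
      rw [← hXd i]
      exact (indepFun_iff_map_prod_eq_prod_map_map hTm.aemeasurable
        (hX i).aemeasurable).mp hI
    have haeT : ∀ᵐ t ∂(P.map T), 0 ≤ t := by
      rw [ae_map_iff (p := fun t : ℝ => 0 ≤ t) hTm.aemeasurable measurableSet_Ici]
      have hae : ∀ᵐ ω ∂P, ∀ j, 0 ≤ X j ω := by
        rw [ae_iff]
        refine measure_mono_null (fun ω h => ?_) hGc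
        simpa [hGdef] using h
      exact hae.mono fun ω h => Finset.sum_nonneg fun j _ => h j
    have hstep : P (A i)
        = ∫⁻ t, expMeasure l (Ici (t + a)) ∂(P.map T) := by
      rw [hA, ← Measure.map_apply (hTm.prodMk (hX i)) hsetm, hmap,
        Measure.prod_apply hsetm]
      exact lintegral_congr fun t => rfl
    rw [hstep]
    have h2 : ∫⁻ t, expMeasure l (Ici (t + a)) ∂(P.map T)
        = ∫⁻ t, ENNReal.ofReal (Real.exp (-(l * a)))
            * ENNReal.ofReal (Real.exp (-(l * t))) ∂(P.map T) := by
      refine lintegral_congr_ae (haeT.mono fun t ht => ?_)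
      show (expMeasure l) (Ici (t + a)) = ENNReal.ofReal (Real.exp (-(l * a)))
          * ENNReal.ofReal (Real.exp (-(l * t)))
      rw [exp_survival hl (by linarith), ← ENNReal.ofReal_mul (Real.exp_nonneg _),
        ← Real.exp_add]
      congr 2; ring
    rw [h2, lintegral_const_mul _ (measurable_exp_neg_oR l),
      lintegral_map (measurable_exp_neg_oR l) hTm]
    have h3 : ∫⁻ ω, ENNReal.ofReal (Real.exp (-(l * T ω))) ∂P
        = ENNReal.ofReal (1/2) ^ (J - 1) := by
      rw [show (J - 1) = (Finset.univ.erase i).card by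
        rw [Finset.card_erase_of_mem (Finset.mem_univ i), Finset.card_univ, Fintype.card_fin]]
      exact lintegral_exp_neg_sum P hl X hX hindep hXd _
    rw [h3, mul_comm]
  -- disjointness and union
  have hdisj : Pairwise (Function.onFun Disjoint fun i => A i ∩ G) := by
    intro i j hij
    rw [Function.onFun, Set.disjoint_left]
    rintro ω ⟨hi, hGω⟩ ⟨hj, -⟩
    have hle : X i ω + X j ω ≤ ∑ k, X k ω := by
      rw [← Finset.sum_pair (f := fun k => X k ω) hij]
      exact Finset.sum_le_sum_of_subset_of_nonneg (Finset.subset_univ _)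
        (fun k _ _ => hGω k)
    simp only [hAdef, mem_setOf_eq, ge_iff_le] at hi hj
    linarith
  have hU : {ω | ∃ i, 2 * X i ω ≥ (∑ j, X j ω) + a} = ⋃ i, A i := by
    ext ω; simp [hAdef]
  rw [hU, ← hinterG (⋃ i, A i), Set.iUnion_inter,
    measure_iUnion hdisj (fun i => (hAmeas i).inter hGmeas)]
  have hAiG : ∀ i, P (A i ∩ G) = P (A i) := fun i => hinterG (A i)
  simp_rw [hAiG, hkey]
  rw [tsum_fintype]
  rw [Finset.sum_const, Finset.card_univ, Fintype.card_fin, nsmul_eq_mul]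
  rw [← ENNReal.ofReal_natCast J, ← ENNReal.ofReal_pow (by norm_num),
    ← ENNReal.ofReal_mul (by positivity), ← ENNReal.ofReal_mul (by positivity)]
  rw [mul_assoc]
end

section
/- For every integer J ≥ 2, (1/Γ(J)) · ∫₀^{J − 3/2} t^{J−1} e^{−t} dt < 1/2; that is, the regularized lower incomplete Gamma function satisfies G(J − 3/2, J) < 1/2. -/
open Real Set MeasureTheory

lemma key_ineq {x : ℝ} (hx : 0 < x) : 1 - x < (1 + x) * Real.exp (-(2*x)) := by
  have hderiv : ∀ y : ℝ, HasDerivAt (fun y : ℝ => (1 + y) * Real.exp (-(2*y)) + y)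
      (1 - (1 + 2*y) * Real.exp (-(2*y))) y := by
    intro y
    have h1 : HasDerivAt (fun y : ℝ => -(2*y)) (-2) y := by
      have h := ((hasDerivAt_id y).const_mul (2:ℝ)).neg
      simp only [mul_one] at h
      exact h
    have h2 : HasDerivAt (fun y : ℝ => Real.exp (-(2*y))) (Real.exp (-(2*y)) * (-2)) y :=
      (Real.hasDerivAt_exp _).comp y h1
    have h3 : HasDerivAt (fun y : ℝ => (1 + y)) 1 y := by
      simpa using (hasDerivAt_id y).const_add 1
    have h4 : HasDerivAt (fun y : ℝ => (1 + y) * Real.exp (-(2*y)) + y) _ y :=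
      (h3.mul h2).add (hasDerivAt_id y)
    convert h4 using 1
    ring
  have hmono : StrictMonoOn (fun y : ℝ => (1 + y) * Real.exp (-(2*y)) + y) (Ici 0) := by
    apply strictMonoOn_of_deriv_pos (convex_Ici 0)
    · exact ((continuous_const.add continuous_id).mul
        ((continuous_const.mul continuous_id).neg.rexp)).add continuous_id |>.continuousOn
    · intro y hy
      rw [interior_Ici] at hy
      rw [(hderiv y).deriv]
      have hy' : 0 < y := hy
      have h5 : (1 + 2*y) < Real.exp (2*y) := by
        have := Real.add_one_lt_exp (x := 2*y) (by linarith : (2*y:ℝ) ≠ 0)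
        linarith
      have h6 : (1 + 2*y) * Real.exp (-(2*y)) < Real.exp (2*y) * Real.exp (-(2*y)) := by
        apply mul_lt_mul_of_pos_right h5 (Real.exp_pos _)
      rw [← Real.exp_add] at h6
      simp at h6
      linarith
  have := hmono (self_mem_Ici (a := (0:ℝ))) (mem_Ici.mpr hx.le) hx
  simp only [mul_zero, neg_zero, Real.exp_zero, mul_one, add_zero] at this
  linarith

lemma pointwise_refl {n : ℕ} (hn : 1 ≤ n) {s : ℝ} (hs : 0 < s) (hsm : s < (n:ℝ)) :
    s ^ n * Real.exp (-s) < (2*(n:ℝ) - s) ^ n * Real.exp (-(2*(n:ℝ) - s)) := by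
  set m : ℝ := (n:ℝ) with hm
  have hm0 : 0 < m := lt_trans hs hsm
  set x : ℝ := (m - s) / m with hx
  have hx0 : 0 < x := div_pos (by linarith) hm0
  have hkey := key_ineq hx0
  -- m * (1 - x) = s, m * (1 + x) = 2m - s
  have e1 : m * (1 - x) = s := by rw [hx]; field_simp; ring
  have e2 : m * (1 + x) = 2*m - s := by rw [hx]; field_simp; ring
  have h1 : s < (2*m - s) * Real.exp (-(2*x)) := by
    calc s = m * (1 - x) := e1.symm
    _ < m * ((1 + x) * Real.exp (-(2*x))) := by
        exact mul_lt_mul_of_pos_left hkey hm0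
    _ = (2*m - s) * Real.exp (-(2*x)) := by rw [← e2]; ring
  have h2 : s ^ n < ((2*m - s) * Real.exp (-(2*x))) ^ n :=
    pow_lt_pow_left₀ h1 hs.le (by omega)
  have h3 : ((2*m - s) * Real.exp (-(2*x))) ^ n
      = (2*m - s) ^ n * Real.exp (-(2*(m - s))) := by
    rw [mul_pow, ← Real.exp_nat_mul]
    congr 1
    rw [hx, hm]
    field_simp
  have h4 : s ^ n * Real.exp (-s) < (2*m - s) ^ n * Real.exp (-(2*(m-s))) * Real.exp (-s) := by
    apply mul_lt_mul_of_pos_right _ (Real.exp_pos _)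
    rw [← h3]; exact h2
  calc s ^ n * Real.exp (-s) < (2*m - s) ^ n * Real.exp (-(2*(m-s))) * Real.exp (-s) := h4
  _ = (2*m - s) ^ n * Real.exp (-(2*m - s)) := by
      rw [mul_assoc, ← Real.exp_add]
      ring_nf

/-- For every integer `J ≥ 2`,
`(1/Γ(J)) ∫₀^{J−3/2} t^{J−1} e^{−t} dt < 1/2`, i.e. the regularized lower
incomplete Gamma function satisfies `G(J − 3/2, J) < 1/2`. -/
theorem stmt_16 (J : ℕ) (hJ : 2 ≤ J) :
    (1 / Real.Gamma J) * ∫ t in (0:ℝ)..((J : ℝ) - 3/2), t ^ (J - 1) * Real.exp (-t)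
      < 1/2 := by
  obtain ⟨n, rfl⟩ : ∃ n, J = n + 1 := ⟨J - 1, by omega⟩
  have hn : 1 ≤ n := by omega
  set m : ℝ := (n:ℝ) with hm
  have hm1 : 1 ≤ m := by rw [hm]; exact_mod_cast hn
  set f : ℝ → ℝ := fun t => t ^ n * Real.exp (-t) with hf
  have hfc : Continuous f := (continuous_pow n).mul (Real.continuous_exp.comp continuous_neg)
  have hfint : ∀ a b : ℝ, IntervalIntegrable f volume a b :=
    fun a b => hfc.intervalIntegrable a b
  have hcoe : ((n+1:ℕ):ℝ) - 3/2 = m - 1/2 := by push_cast; ring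
  simp only [Nat.add_sub_cancel, hcoe]
  -- the three integrals
  have hA : (∫ t in (0:ℝ)..(m - 1/2), f t) < ∫ t in (0:ℝ)..m, f t := by
    have hsplit := intervalIntegral.integral_add_adjacent_intervals
      (hfint 0 (m - 1/2)) (hfint (m - 1/2) m)
    have hpos : 0 < ∫ t in (m - 1/2)..m, f t := by
      apply intervalIntegral.intervalIntegral_pos_of_pos_on (hfint _ _) _ (by linarith)
      intro t ht
      have h0 : 0 < t := by have := ht.1; linarith
      rw [hf]; positivity
    linarith
  have hBC : (∫ t in (0:ℝ)..m, f t) < ∫ t in m..(2*m), f t := by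
    have hrw : (∫ t in (0:ℝ)..m, f (2*m - t)) = ∫ t in m..(2*m), f t := by
      have h := intervalIntegral.integral_comp_sub_left (a := (0:ℝ)) (b := m) f (2*m)
      rw [h, show 2*m - m = m by ring, show 2*m - (0:ℝ) = 2*m by ring]
    rw [← hrw]
    have hgc : Continuous (fun t : ℝ => f (2*m - t)) :=
      hfc.comp (continuous_const.sub continuous_id)
    have hdiff : 0 < ∫ t in (0:ℝ)..m, (f (2*m - t) - f t) := by
      apply intervalIntegral.intervalIntegral_pos_of_pos_on
        ((hgc.sub hfc).intervalIntegrable _ _) _ (by linarith)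
      intro t ht
      have hpt := pointwise_refl hn ht.1 ht.2
      simp only [hf, Pi.sub_apply]
      linarith [hpt]
    have hsub := intervalIntegral.integral_sub (hgc.intervalIntegrable (0:ℝ) m) (hfint 0 m)
    rw [hsub] at hdiff
    linarith
  -- Gamma as integral over Ioi 0
  have hpos1 : (0:ℝ) < (n:ℝ) + 1 := by positivity
  have hint_eq : (fun x : ℝ => Real.exp (-x) * x ^ ((n:ℝ) + 1 - 1)) = f := by
    funext x
    rw [hf, show ((n:ℝ) + 1 - 1) = ((n:ℕ):ℝ) by ring, Real.rpow_natCast]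
    ring
  have hGamma : Real.Gamma ((n:ℝ) + 1) = ∫ x in Set.Ioi (0:ℝ), f x := by
    rw [Real.Gamma_eq_integral hpos1, hint_eq]
  have hfI : MeasureTheory.IntegrableOn f (Set.Ioi (0:ℝ)) := by
    rw [← hint_eq]; exact Real.GammaIntegral_convergent hpos1
  have htail : (∫ t in (0:ℝ)..(2*m), f t) ≤ ∫ x in Set.Ioi (0:ℝ), f x := by
    rw [intervalIntegral.integral_of_le (by linarith : (0:ℝ) ≤ 2*m)]
    apply MeasureTheory.setIntegral_mono_set hfI
    · refine (MeasureTheory.ae_restrict_iff' measurableSet_Ioi).mpr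
        (Filter.Eventually.of_forall fun x hx => ?_)
      have hx0 : (0:ℝ) < x := hx
      rw [hf]; positivity
    · exact HasSubset.Subset.eventuallyLE Set.Ioc_subset_Ioi_self
  have hsplit2 := intervalIntegral.integral_add_adjacent_intervals
    (hfint 0 m) (hfint m (2*m))
  have hΓpos : 0 < Real.Gamma (((n+1:ℕ)):ℝ) := Real.Gamma_pos_of_pos (by positivity)
  have hcast : (((n+1:ℕ)):ℝ) = (n:ℝ) + 1 := by push_cast; ring
  rw [hcast] at hΓpos ⊢
  have hAΓ : (∫ t in (0:ℝ)..(m - 1/2), f t) * 2 < Real.Gamma ((n:ℝ) + 1) := by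
    rw [hGamma]
    linarith
  calc (1 / Real.Gamma ((n:ℝ) + 1)) * ∫ t in (0:ℝ)..(m - 1/2), f t
      = (∫ t in (0:ℝ)..(m - 1/2), f t) / Real.Gamma ((n:ℝ) + 1) := by ring
  _ < 1/2 := by
      rw [div_lt_div_iff₀ hΓpos two_pos]
      linarith
end

section
/- Let J ≥ 2 be an integer, let γ ≥ σ > 0, and let S be a random variable having the Gamma distribution with shape J and rate 1/γ². Then P(S < σ²·(J − 3/2)) < 1/2. -/
open MeasureTheory ProbabilityTheory

section Aux
open Real Set
open scoped ENNReal


-- (1 - x) * exp (2x) ≤ 1 + x for x ≥ 0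
lemma aux_exp (x : ℝ) (hx : 0 ≤ x) : (1 - x) * Real.exp (2 * x) ≤ 1 + x := by
  have H : ∀ y : ℝ, HasDerivAt (fun z : ℝ => 1 + z - (1 - z) * Real.exp (2 * z))
      (1 - ((-1) * Real.exp (2 * y) + (1 - y) * (Real.exp (2 * y) * 2))) y := by
    intro y
    have h1 : HasDerivAt (fun z : ℝ => 1 + z) 1 y := (hasDerivAt_id y).const_add 1
    have h2 : HasDerivAt (fun z : ℝ => 2 * z) 2 y := by
      simpa using (hasDerivAt_id y).const_mul (2 : ℝ)
    have h3 : HasDerivAt (fun z : ℝ => Real.exp (2 * z)) (Real.exp (2 * y) * 2) y := h2.exp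
    have h4 : HasDerivAt (fun z : ℝ => 1 - z) (-1) y := (hasDerivAt_id y).const_sub 1
    exact h1.sub (h4.mul h3)
  have hmono : Monotone (fun z : ℝ => 1 + z - (1 - z) * Real.exp (2 * z)) := by
    apply monotone_of_deriv_nonneg (fun y => (H y).differentiableAt)
    intro y
    rw [(H y).deriv]
    have h1 : Real.exp (-(2 * y)) * Real.exp (2 * y) = 1 := by
      rw [← Real.exp_add]; simp
    nlinarith [Real.add_one_le_exp (-(2 * y)), Real.exp_pos (2 * y)]
  have h0 := hmono hx
  simp only [Real.exp_zero] at h0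
  norm_num at h0
  linarith

lemma aux_core (m v : ℝ) (hm : 0 < m) (hv0 : 0 ≤ v) (hvm : v ≤ m) :
    (m - v) ^ m * Real.exp (2 * v) ≤ (m + v) ^ m := by
  have h1 : (m - v) * Real.exp (2 * (v / m)) ≤ m + v := by
    have hx := aux_exp (v / m) (by positivity)
    have e1 : m * (1 - v / m) = m - v := by field_simp
    have e2 : m * (1 + v / m) = m + v := by field_simp
    calc (m - v) * Real.exp (2 * (v / m))
        = m * ((1 - v / m) * Real.exp (2 * (v / m))) := by rw [← mul_assoc, e1]
      _ ≤ m * (1 + v / m) := mul_le_mul_of_nonneg_left hx hm.le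
      _ = m + v := e2
  have h2 : ((m - v) * Real.exp (2 * (v / m))) ^ m ≤ (m + v) ^ m :=
    Real.rpow_le_rpow (mul_nonneg (by linarith) (Real.exp_pos _).le) h1 hm.le
  rw [Real.mul_rpow (by linarith) (Real.exp_pos _).le, ← Real.exp_mul] at h2
  have e3 : 2 * (v / m) * m = 2 * v := by field_simp
  rwa [e3] at h2

lemma aux_pdf_refl {a r u : ℝ} (ha : 2 ≤ a) (hr : 0 < r) (hu : 0 ≤ u)
    (hut : u ≤ (a - 1) / r) :
    gammaPDFReal a r ((a - 1) / r - u) ≤ gammaPDFReal a r ((a - 1) / r + u) := by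
  set m : ℝ := a - 1 with hm_def
  have hm : 0 < m := by simp only [hm_def]; linarith
  have hv0 : 0 ≤ r * u := by positivity
  have hvm : r * u ≤ m := by
    have := mul_le_mul_of_nonneg_left hut hr.le
    rwa [mul_div_cancel₀ _ hr.ne'] at this
  have ht1 : 0 ≤ m / r - u := by linarith [hut]
  have ht2 : 0 ≤ m / r + u := by positivity
  unfold gammaPDFReal
  rw [if_pos ht1, if_pos ht2]
  have hC : 0 ≤ r ^ a / Real.Gamma a := by
    have := Real.Gamma_pos_of_pos (show (0:ℝ) < a by linarith)
    positivity
  rw [mul_assoc, mul_assoc]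
  refine mul_le_mul_of_nonneg_left ?_ hC
  -- key: (m/r - u)^(a-1) * exp(-(r*(m/r-u))) ≤ (m/r + u)^(a-1) * exp(-(r*(m/r+u)))
  have e1 : m / r - u = (m - r * u) / r := by field_simp
  have e2 : m / r + u = (m + r * u) / r := by field_simp
  have e3 : r * (m / r - u) = m - r * u := by field_simp
  have e4 : r * (m / r + u) = m + r * u := by field_simp
  rw [e3, e4, e1, e2, Real.div_rpow (by linarith) hr.le, Real.div_rpow (by linarith) hr.le, ← hm_def]
  have core := aux_core m (r * u) hm hv0 hvm
  have eexp : Real.exp (-(m - r * u)) = Real.exp (2 * (r * u)) * Real.exp (-(m + r * u)) := by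
    rw [← Real.exp_add]; ring_nf

  calc (m - r * u) ^ m / r ^ m * Real.exp (-(m - r * u))
      = ((m - r * u) ^ m * Real.exp (2 * (r * u))) * (Real.exp (-(m + r * u)) / r ^ m) := by
        rw [eexp]; ring
    _ ≤ (m + r * u) ^ m * (Real.exp (-(m + r * u)) / r ^ m) := by
        refine mul_le_mul_of_nonneg_right core ?_
        positivity
    _ = (m + r * u) ^ m / r ^ m * Real.exp (-(m + r * u)) := by ring

end Aux

section Main
open Real Set
open scoped ENNReal

/-- Let `J ≥ 2`, `γ ≥ σ > 0`, and let `S` have the Gamma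
distribution with shape `J` and rate `1/γ²`. Then `P(S < σ²(J − 3/2)) < 1/2`. -/
theorem stmt_17 {Ω : Type*} [MeasurableSpace Ω] (P : Measure Ω) [IsProbabilityMeasure P]
    (J : ℕ) (hJ : 2 ≤ J) (γ σ : ℝ) (hσ : 0 < σ) (hγ : σ ≤ γ)
    (S : Ω → ℝ) (hS : Measurable S)
    (hSd : P.map S = gammaMeasure J (1 / γ^2)) :
    P {ω | S ω < σ^2 * ((J : ℝ) - 3/2)} < 1/2 := by
  have hγ0 : 0 < γ := lt_of_lt_of_le hσ hγ
  set a : ℝ := (J : ℝ) with ha_def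
  set r : ℝ := 1 / γ ^ 2 with hr_def
  have ha2 : (2 : ℝ) ≤ a := by rw [ha_def]; exact_mod_cast hJ
  have ha0 : 0 < a := by linarith
  have hr : 0 < r := by positivity
  set c : ℝ := σ ^ 2 * (a - 3/2) with hc_def
  set t : ℝ := (a - 1) / r with ht_def
  have hteq : t = (a - 1) * γ ^ 2 := by rw [ht_def, hr_def]; field_simp
  have hc0 : 0 < c := by
    have : (0:ℝ) < a - 3/2 := by linarith
    positivity
  have hct : c < t := by
    rw [hteq, hc_def]
    have hσγ : σ ^ 2 ≤ γ ^ 2 := by nlinarith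
    nlinarith
  set g : ℝ → ℝ := gammaPDFReal a r with hg_def
  have hg_nonneg : ∀ x, 0 ≤ g x := gammaPDFReal_nonneg ha0 hr
  have hgInt : Integrable g := by
    refine ⟨(measurable_gammaPDFReal a r).aestronglyMeasurable, ?_⟩
    rw [hasFiniteIntegral_iff_ofReal (ae_of_all _ hg_nonneg)]
    have h1 : ∫⁻ x, ENNReal.ofReal (g x) = 1 := lintegral_gammaPDF_eq_one ha0 hr
    rw [h1]; exact ENNReal.one_lt_top
  set μ : Measure ℝ := gammaMeasure a r with hμ_def
  have hμs : ∀ s : Set ℝ, MeasurableSet s → μ s = ENNReal.ofReal (∫ x in s, g x) := by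
    intro s hs
    rw [hμ_def, gammaMeasure, withDensity_apply _ hs,
      ofReal_integral_eq_lintegral_ofReal hgInt.integrableOn
        (ae_of_all _ hg_nonneg)]
    rfl
  -- reduce goal to μ (Iio c)
  have hmap : P {ω | S ω < c} = μ (Iio c) := by
    rw [← hSd, Measure.map_apply hS measurableSet_Iio]
    rfl
  -- zero below 0
  have hg_zero : ∀ x ≤ (0:ℝ), g x = 0 := by
    intro x hx
    rcases hx.lt_or_eq with h | h
    · simp [hg_def, gammaPDFReal, not_le.mpr h]
    · subst h
      simp [hg_def, gammaPDFReal, Real.zero_rpow (show a - 1 ≠ 0 by linarith)]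
  set I1 : ℝ := ∫ x in Iio c, g x with hI1_def
  set I2 : ℝ := ∫ x in Ici c, g x with hI2_def
  have hI1nn : 0 ≤ I1 := integral_nonneg hg_nonneg
  have hI2nn : 0 ≤ I2 := integral_nonneg hg_nonneg
  have hprob : IsProbabilityMeasure μ := isProbabilityMeasure_gammaMeasure ha0 hr
  have hIsum : I1 + I2 = 1 := by
    have hcompl : μ (Iio c) + μ (Ici c) = 1 := by
      have h := measure_add_measure_compl (μ := μ) (measurableSet_Iio (a := c))
      rwa [compl_Iio, measure_univ] at h
    rw [hμs _ measurableSet_Iio, hμs _ measurableSet_Ici,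
      ← ENNReal.ofReal_add hI1nn hI2nn] at hcompl
    have := ENNReal.ofReal_eq_one.mp hcompl
    linarith [this]
  -- I1 as integral over Ioc 0 c
  have hI1eq : I1 = ∫ x in Ioc 0 c, g x := by
    have hsplit : Iio c = Iic 0 ∪ Ioo 0 c := by
      ext x
      simp only [mem_Iio, mem_union, mem_Iic, mem_Ioo]
      constructor
      · intro h
        rcases le_or_gt x 0 with h0 | h0
        · exact Or.inl h0
        · exact Or.inr ⟨h0, h⟩
      · rintro (h | ⟨_, h⟩)
        · linarith
        · exact h
    have hdisj : Disjoint (Iic (0:ℝ)) (Ioo 0 c) :=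
      (Set.Iic_disjoint_Ioi le_rfl).mono_right Ioo_subset_Ioi_self
    have hIic : ∫ x in Iic (0:ℝ), g x = 0 := by
      rw [setIntegral_congr_fun measurableSet_Iic (fun x hx => hg_zero x hx)]
      simp
    rw [hI1_def, hsplit, setIntegral_union hdisj measurableSet_Ioo
      hgInt.integrableOn hgInt.integrableOn, hIic, zero_add,
      ← integral_Ioc_eq_integral_Ioo]
  -- strict step
  have hA : ∫ x in Ioc 0 c, g x < ∫ x in Ioc 0 t, g x := by
    rw [← Set.Ioc_union_Ioc_eq_Ioc hc0.le hct.le,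
      setIntegral_union (Set.Ioc_disjoint_Ioc_of_le le_rfl) measurableSet_Ioc
        hgInt.integrableOn hgInt.integrableOn]
    have hpos : 0 < ∫ x in Ioc c t, g x := by
      rw [setIntegral_pos_iff_support_of_nonneg_ae (ae_of_all _ hg_nonneg)
        hgInt.integrableOn]
      have hsub : Ioc c t ⊆ Function.support g ∩ Ioc c t := fun x hx =>
        ⟨(gammaPDFReal_pos ha0 hr (hc0.trans hx.1)).ne', hx⟩
      calc (0:ℝ≥0∞) < volume (Ioc c t) := by
            rw [Real.volume_Ioc]
            exact ENNReal.ofReal_pos.mpr (by linarith)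
        _ ≤ volume (Function.support g ∩ Ioc c t) := measure_mono hsub
    linarith
  -- reflection step
  have ht0 : 0 ≤ t := by linarith
  have hB : ∫ x in Ioc 0 t, g x ≤ I2 := by
    have i1 : ∫ x in Ioc 0 t, g x = ∫ x in (0:ℝ)..t, g x :=
      (intervalIntegral.integral_of_le ht0).symm
    have hrefl : ∫ u in (0:ℝ)..t, g (t - u) = ∫ x in (0:ℝ)..t, g x := by
      rw [intervalIntegral.integral_comp_sub_left g t]
      norm_num
    have comp1 : IntervalIntegrable (fun u => g (t - u)) volume 0 t :=
      (hgInt.comp_sub_left t).intervalIntegrable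
    have comp2 : IntervalIntegrable (fun u => g (t + u)) volume 0 t :=
      (hgInt.comp_add_left t).intervalIntegrable
    have hmono : ∫ u in (0:ℝ)..t, g (t - u) ≤ ∫ u in (0:ℝ)..t, g (t + u) := by
      refine intervalIntegral.integral_mono_on ht0 comp1 comp2 fun u hu => ?_
      exact aux_pdf_refl ha2 hr hu.1 hu.2
    have comp_eq : ∫ u in (0:ℝ)..t, g (t + u) = ∫ x in t..(t + t), g x := by
      rw [intervalIntegral.integral_comp_add_left g t]
      norm_num
    have i2 : ∫ x in t..(t + t), g x = ∫ x in Ioc t (t + t), g x :=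
      intervalIntegral.integral_of_le (by linarith)
    have last : ∫ x in Ioc t (t + t), g x ≤ I2 := by
      refine setIntegral_mono_set hgInt.integrableOn (ae_of_all _ hg_nonneg) ?_
      exact HasSubset.Subset.eventuallyLE fun x hx => le_of_lt (hct.trans hx.1)
    calc ∫ x in Ioc 0 t, g x = ∫ u in (0:ℝ)..t, g (t - u) := by rw [hrefl, ← i1]
      _ ≤ ∫ u in (0:ℝ)..t, g (t + u) := hmono
      _ = ∫ x in Ioc t (t + t), g x := by rw [comp_eq, i2]
      _ ≤ I2 := last
  have hI1I2 : I1 < I2 := by rw [hI1eq]; linarith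
  have hI1half : I1 < 1 / 2 := by linarith
  rw [hmap, hμs _ measurableSet_Iio]
  have h2 : (1 / 2 : ℝ≥0∞) = ENNReal.ofReal (1 / 2 : ℝ) := by
    rw [ENNReal.ofReal_div_of_pos (by norm_num)]
    norm_num
  rw [h2]
  exact ENNReal.ofReal_lt_ofReal_iff (by norm_num) |>.mpr hI1half

end Main
end

section
/- Let λ > 0 and s > 0, and let X, Y be i.i.d. random variables each having the exponential distribution with rate λ. Set U := max(X,Y) and V := min(X,Y). Then 1 − e^{−λs/2} ≤ P(V² + s·V + (s/2)·U > U²) ≤ 1 − e^{−λs}. -/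
open MeasureTheory ProbabilityTheory Real Set

namespace Stmt18Aux

lemma expMeasure_eq (l : ℝ) : expMeasure l = volume.withDensity (exponentialPDF l) := rfl

lemma expMeasure_Iic (l : ℝ) (hl : 0 < l) (x : ℝ) :
    expMeasure l (Iic x) = ENNReal.ofReal (if 0 ≤ x then 1 - exp (-(l * x)) else 0) := by
  rw [expMeasure_eq, withDensity_apply _ measurableSet_Iic,
    lintegral_exponentialPDF_eq_antiDeriv hl]

lemma expMeasure_singleton (l x : ℝ) : expMeasure l {x} = 0 :=
  (withDensity_absolutelyContinuous _ _) (measure_singleton x)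

lemma expMeasure_Iio (l : ℝ) (hl : 0 < l) (x : ℝ) :
    expMeasure l (Iio x) = ENNReal.ofReal (if 0 ≤ x then 1 - exp (-(l * x)) else 0) := by
  rw [← expMeasure_Iic l hl x]
  refine le_antisymm (measure_mono Iio_subset_Iic_self) ?_
  calc expMeasure l (Iic x) ≤ expMeasure l (Iio x) + expMeasure l {x} := by
        rw [← Iio_union_right]; exact measure_union_le _ _
    _ = expMeasure l (Iio x) := by rw [expMeasure_singleton, add_zero]

lemma expMeasure_Iic_zero (l : ℝ) (hl : 0 < l) : expMeasure l (Iic 0) = 0 := by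
  simp [expMeasure_Iic l hl 0]

lemma expMeasure_Ici (l : ℝ) (hl : 0 < l) {x : ℝ} (hx : 0 ≤ x) :
    expMeasure l (Ici x) = ENNReal.ofReal (exp (-(l * x))) := by
  haveI := isProbabilityMeasure_expMeasure hl
  have hc : Ici x = (Iio x)ᶜ := compl_Iio.symm
  rw [hc, measure_compl measurableSet_Iio (measure_ne_top _ _), expMeasure_Iio l hl x,
    if_pos hx, measure_univ]
  rw [← ENNReal.ofReal_one, ← ENNReal.ofReal_sub _ (by
    refine sub_nonneg.mpr ?_
    rw [Real.exp_le_one_iff]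
    nlinarith)]
  norm_num

lemma expMeasure_lintegral_exp (l : ℝ) (hl : 0 < l) :
    ∫⁻ y, ENNReal.ofReal (exp (-(l * y))) ∂(expMeasure l) = ENNReal.ofReal (1 / 2) := by
  have hmeas : Measurable (exponentialPDF l) := (measurable_exponentialPDFReal l).ennreal_ofReal
  rw [expMeasure_eq, lintegral_withDensity_eq_lintegral_mul _ hmeas (by fun_prop)]
  have key : ∀ y : ℝ, (exponentialPDF l * fun y => ENNReal.ofReal (exp (-(l * y)))) y
      = ENNReal.ofReal (1 / 2) * exponentialPDF (2 * l) y := by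
    intro y
    simp only [Pi.mul_apply]
    rcases le_or_gt 0 y with hy | hy
    · rw [exponentialPDF_of_nonneg hy, exponentialPDF_of_nonneg hy,
        ← ENNReal.ofReal_mul (by positivity), ← ENNReal.ofReal_mul (by norm_num)]
      congr 1
      rw [mul_assoc, ← Real.exp_add]
      have h2 : -(l * y) + -(l * y) = -(2 * l * y) := by ring
      rw [h2]
      ring
    · rw [exponentialPDF_of_neg hy, exponentialPDF_of_neg hy, zero_mul, mul_zero]
  rw [lintegral_congr key, lintegral_const_mul _ (by
    have := measurable_exponentialPDFReal (2 * l)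
    exact this.ennreal_ofReal), lintegral_exponentialPDF_eq_one (by linarith), mul_one]

lemma measurable_slab (c : ℝ) : MeasurableSet {p : ℝ × ℝ | p.2 + c ≤ p.1} :=
  measurableSet_le (by fun_prop) measurable_fst

/-- key half integral -/
lemma prod_shift (l : ℝ) (hl : 0 < l) {c : ℝ} (hc : 0 ≤ c) :
    (expMeasure l).prod (expMeasure l) {p : ℝ × ℝ | p.2 + c ≤ p.1}
      = ENNReal.ofReal (exp (-(l * c)) / 2) := by
  haveI := isProbabilityMeasure_expMeasure hl
  rw [Measure.prod_apply_symm (measurable_slab c)]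
  have hae : ∀ᵐ y ∂(expMeasure l), 0 ≤ y := by
    rw [ae_iff]
    refine measure_mono_null (fun y hy => ?_) (expMeasure_Iic_zero l hl)
    simpa using le_of_lt (not_le.mp hy)
  have : ∫⁻ y, expMeasure l ((fun x => (x, y)) ⁻¹' {p : ℝ × ℝ | p.2 + c ≤ p.1}) ∂(expMeasure l)
      = ∫⁻ y, ENNReal.ofReal (exp (-(l * c))) * ENNReal.ofReal (exp (-(l * y)))
        ∂(expMeasure l) := by
    refine lintegral_congr_ae (hae.mono fun y hy => ?_)
    dsimp only
    have : (fun x => (x, y)) ⁻¹' {p : ℝ × ℝ | p.2 + c ≤ p.1} = Ici (y + c) := by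
      ext x; simp [Set.mem_Ici, add_comm]
    rw [this, expMeasure_Ici l hl (by linarith), ← ENNReal.ofReal_mul (by positivity),
      ← Real.exp_add]
    ring_nf
  rw [this, lintegral_const_mul _ (by fun_prop), expMeasure_lintegral_exp l hl,
    ← ENNReal.ofReal_mul (by positivity)]
  ring_nf

lemma prod_abs_lt (l : ℝ) (hl : 0 < l) {c : ℝ} (hc : 0 < c) :
    (expMeasure l).prod (expMeasure l) {p : ℝ × ℝ | |p.1 - p.2| < c}
      = ENNReal.ofReal (1 - exp (-(l * c))) := by
  haveI := isProbabilityMeasure_expMeasure hl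
  haveI : IsProbabilityMeasure ((expMeasure l).prod (expMeasure l)) := by infer_instance
  have hm2 : MeasurableSet {p : ℝ × ℝ | p.1 + c ≤ p.2} :=
    measurableSet_le (by fun_prop) measurable_snd
  set μ2 := (expMeasure l).prod (expMeasure l) with hμ2
  have hswap : μ2 {p : ℝ × ℝ | p.1 + c ≤ p.2} = μ2 {p : ℝ × ℝ | p.2 + c ≤ p.1} := by
    calc μ2 {p : ℝ × ℝ | p.1 + c ≤ p.2}
        = (Measure.map Prod.swap μ2) {p : ℝ × ℝ | p.1 + c ≤ p.2} := by
          rw [hμ2, Measure.prod_swap]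
      _ = μ2 {p : ℝ × ℝ | p.2 + c ≤ p.1} := by
          rw [Measure.map_apply measurable_swap hm2]
          rfl
  have hcompl : {p : ℝ × ℝ | |p.1 - p.2| < c}
      = ({p : ℝ × ℝ | p.2 + c ≤ p.1} ∪ {p : ℝ × ℝ | p.1 + c ≤ p.2})ᶜ := by
    ext p
    simp only [mem_compl_iff, mem_union, mem_setOf_eq, not_or, not_le, abs_sub_lt_iff]
    constructor
    · rintro ⟨h1, h2⟩; constructor <;> linarith
    · rintro ⟨h1, h2⟩; constructor <;> linarith
  have hdisj : Disjoint {p : ℝ × ℝ | p.2 + c ≤ p.1} {p : ℝ × ℝ | p.1 + c ≤ p.2} := by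
    rw [Set.disjoint_left]
    rintro p h1 h2
    simp only [mem_setOf_eq] at h1 h2
    linarith
  have hunion : μ2 ({p : ℝ × ℝ | p.2 + c ≤ p.1} ∪ {p : ℝ × ℝ | p.1 + c ≤ p.2})
      = ENNReal.ofReal (exp (-(l * c))) := by
    rw [measure_union hdisj hm2, hswap,
      prod_shift l hl hc.le, ← ENNReal.ofReal_add (by positivity) (by positivity)]
    ring_nf
  rw [hcompl, measure_compl ((measurable_slab c).union hm2) (measure_ne_top _ _), hunion,
    measure_univ, ← ENNReal.ofReal_one, ← ENNReal.ofReal_sub _ (by positivity)]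


lemma pointwise_lower {s u v d : ℝ} (hs : 0 < s) (hv : 0 < v) (hd : u - v = d)
    (hd0 : 0 ≤ d) (hd2 : d < s / 2) :
    u ^ 2 < v ^ 2 + s * v + s / 2 * u := by
  nlinarith [mul_pos (by linarith : (0:ℝ) < s / 2 - d) hv,
    mul_nonneg (by linarith : (0:ℝ) ≤ s / 2 - d) hd0, mul_pos hs hv]

lemma pointwise_upper {s u v d : ℝ} (hs : 0 < s) (hv : 0 < v) (hd : u - v = d)
    (hsd : s ≤ d) (h : u ^ 2 < v ^ 2 + s * v + s / 2 * u) : False := by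
  nlinarith [mul_nonneg (by linarith : (0:ℝ) ≤ d - s) hv.le,
    mul_nonneg (by linarith : (0:ℝ) ≤ d - s) (by linarith : (0:ℝ) ≤ d),
    mul_pos hs hv, mul_pos hs (lt_of_lt_of_le hs hsd)]

end Stmt18Aux


/-- If `X, Y` are i.i.d. exponential with rate `λ > 0`,
`U := max(X,Y)`, `V := min(X,Y)`, then for `s > 0`,
`1 − e^{−λs/2} ≤ P(V² + sV + (s/2)U > U²) ≤ 1 − e^{−λs}`. -/
theorem stmt_18 {Ω : Type*} [MeasurableSpace Ω] (P : Measure Ω) [IsProbabilityMeasure P]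
    (l : ℝ) (hl : 0 < l) (s : ℝ) (hs : 0 < s)
    (X Y : Ω → ℝ) (hX : Measurable X) (hY : Measurable Y)
    (hindep : IndepFun X Y P)
    (hXd : P.map X = expMeasure l)
    (hYd : P.map Y = expMeasure l)
    (U V : Ω → ℝ) (hU : U = fun ω => max (X ω) (Y ω))
    (hV : V = fun ω => min (X ω) (Y ω)) :
    ENNReal.ofReal (1 - Real.exp (-(l * s / 2)))
      ≤ P {ω | V ω ^ 2 + s * V ω + (s / 2) * U ω > U ω ^ 2} ∧
    P {ω | V ω ^ 2 + s * V ω + (s / 2) * U ω > U ω ^ 2}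
      ≤ ENNReal.ofReal (1 - Real.exp (-(l * s))) := by
  have hG : Measurable fun ω => (X ω, Y ω) := hX.prodMk hY
  have hmap : P.map (fun ω => (X ω, Y ω)) = (expMeasure l).prod (expMeasure l) := by
    have h := (indepFun_iff_map_prod_eq_prod_map_map hX.aemeasurable hY.aemeasurable).mp hindep
    rw [hXd, hYd] at h
    exact h
  have habs : ∀ c : ℝ, 0 < c →
      P {ω | |X ω - Y ω| < c} = ENNReal.ofReal (1 - Real.exp (-(l * c))) := by
    intro c hc
    have hmeasS : MeasurableSet {p : ℝ × ℝ | |p.1 - p.2| < c} :=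
      measurableSet_lt (by fun_prop) measurable_const
    have hpre : {ω | |X ω - Y ω| < c}
        = (fun ω => (X ω, Y ω)) ⁻¹' {p : ℝ × ℝ | |p.1 - p.2| < c} := rfl
    rw [hpre, ← Measure.map_apply hG hmeasS, hmap, Stmt18Aux.prod_abs_lt l hl hc]
  have hnull : P {ω | min (X ω) (Y ω) ≤ 0} = 0 := by
    have hX0 : P {ω | X ω ≤ 0} = 0 := by
      have : {ω | X ω ≤ 0} = X ⁻¹' (Iic 0) := rfl
      rw [this, ← Measure.map_apply hX measurableSet_Iic, hXd, Stmt18Aux.expMeasure_Iic_zero l hl]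
    have hY0 : P {ω | Y ω ≤ 0} = 0 := by
      have : {ω | Y ω ≤ 0} = Y ⁻¹' (Iic 0) := rfl
      rw [this, ← Measure.map_apply hY measurableSet_Iic, hYd, Stmt18Aux.expMeasure_Iic_zero l hl]
    refine measure_mono_null (fun ω hω => ?_) (measure_union_null hX0 hY0)
    simp only [mem_setOf_eq, min_le_iff] at hω
    exact hω.imp (fun h => h) (fun h => h)
  set E := {ω | V ω ^ 2 + s * V ω + (s / 2) * U ω > U ω ^ 2} with hE
  constructor
  · have hsub : {ω | |X ω - Y ω| < s / 2} ⊆ E ∪ {ω | min (X ω) (Y ω) ≤ 0} := by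
      intro ω hω
      by_cases h0 : min (X ω) (Y ω) ≤ 0
      · exact Or.inr h0
      · push_neg at h0
        refine Or.inl ?_
        simp only [hE, hU, hV, mem_setOf_eq]
        exact Stmt18Aux.pointwise_lower hs h0 (max_sub_min_eq_abs _ _) (abs_nonneg _) (by rw [abs_sub_comm]; exact hω)
    have h2 : l * (s / 2) = l * s / 2 := by ring
    calc ENNReal.ofReal (1 - Real.exp (-(l * s / 2)))
        = P {ω | |X ω - Y ω| < s / 2} := by rw [habs (s / 2) (by positivity), h2]
      _ ≤ P E + P {ω | min (X ω) (Y ω) ≤ 0} :=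
          (measure_mono hsub).trans (measure_union_le _ _)
      _ = P E := by rw [hnull, add_zero]
  · have hsub : E ⊆ {ω | |X ω - Y ω| < s} ∪ {ω | min (X ω) (Y ω) ≤ 0} := by
      intro ω hω
      by_cases h0 : min (X ω) (Y ω) ≤ 0
      · exact Or.inr h0
      · push_neg at h0
        refine Or.inl ?_
        simp only [hE, hU, hV, mem_setOf_eq] at hω
        simp only [mem_setOf_eq]
        by_contra hc
        push_neg at hc
        exact Stmt18Aux.pointwise_upper hs h0 (max_sub_min_eq_abs _ _) (by rw [abs_sub_comm]; exact hc) hω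
    calc P E ≤ P {ω | |X ω - Y ω| < s} + P {ω | min (X ω) (Y ω) ≤ 0} :=
          (measure_mono hsub).trans (measure_union_le _ _)
      _ = ENNReal.ofReal (1 - Real.exp (-(l * s))) := by rw [hnull, add_zero, habs s hs]
end
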